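/- Let t_n be the number of dependency trees with n nodes, defined by the recurrence arising from T(z)(1-T(z))^2 = z. Then for all n ≥ 1, t_n = (1/n) · C(3n-2, n-1), where C denotes the binomial coefficient. -/

import Mathlib

open PowerSeries

open Nat in
private lemma dep_tree_binom_step (m : ℕ) :
    (2*((m:ℚ)+1)*(2*m+3)) * ((3*m+4).choose (m+1) : ℚ)
      = 3*(3*m+2)*(3*m+4) * ((3*m+1).choose m : ℚ) := by
  rw [Nat.cast_choose ℚ (by omega : m+1 ≤ 3*m+4), Nat.cast_choose ℚ (by omega : m ≤ 3*m+1),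
    show 3*m+4-(m+1) = 2*m+3 by omega, show 3*m+1-m = 2*m+1 by omega]
  have h1 : (((3*m+4)! : ℕ) : ℚ) = (3*(m:ℚ)+4)*(3*(m:ℚ)+3)*(3*(m:ℚ)+2)*((3*m+1)! : ℕ) := by
    rw [show 3*m+4 = (3*m+3)+1 by ring, Nat.factorial_succ,
        show 3*m+3 = (3*m+2)+1 by ring, Nat.factorial_succ,
        show 3*m+2 = (3*m+1)+1 by ring, Nat.factorial_succ]
    push_cast; ring
  have h2 : (((m+1)! : ℕ) : ℚ) = ((m:ℚ)+1)*(m ! : ℕ) := by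
    rw [Nat.factorial_succ]; push_cast; ring
  have h3 : (((2*m+3)! : ℕ) : ℚ) = (2*(m:ℚ)+3)*(2*(m:ℚ)+2)*((2*m+1)! : ℕ) := by
    rw [show 2*m+3 = (2*m+2)+1 by ring, Nat.factorial_succ,
        show 2*m+2 = (2*m+1)+1 by ring, Nat.factorial_succ]
    push_cast; ring
  rw [h1, h2, h3]
  have n1 : ((3*m+1)! : ℚ) ≠ 0 := by positivity
  have n2 : ((m)! : ℚ) ≠ 0 := by positivity
  have n3 : ((2*m+1)! : ℚ) ≠ 0 := by positivity
  field_simp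

theorem dependency_tree_count_closed_form
    (T : PowerSeries ℚ)
    (h0 : PowerSeries.constantCoeff T = 0)
    (hT : T * (1 - T) ^ 2 = PowerSeries.X) :
    ∀ n : ℕ, 1 ≤ n →
      PowerSeries.coeff n T = (Nat.choose (3 * n - 2) (n - 1) : ℚ) / n := by
  have D3 : d⁄dX ℚ (3 : ℚ⟦X⟧) = 0 := by
    rw [show (3:ℚ⟦X⟧) = ((3:ℕ):ℚ⟦X⟧) by norm_num]
    exact Derivation.map_natCast _ 3
  -- first derivative relation
  have h1 : d⁄dX ℚ T * ((1 - T) * (1 - 3*T)) = 1 := by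
    have h := congrArg (d⁄dX ℚ) hT
    simp only [Derivation.leibniz, Derivation.leibniz_pow, derivative_X, map_sub,
      Derivation.map_one_eq_zero, smul_eq_mul] at h
    linear_combination h
  -- second derivative relation
  have h2 : d⁄dX ℚ (d⁄dX ℚ T) * ((1 - T) * (1 - 3*T)) = (4 - 6*T) * (d⁄dX ℚ T)^2 := by
    have h := congrArg (d⁄dX ℚ) h1
    simp only [Derivation.leibniz, Derivation.leibniz_pow, derivative_X, map_sub, map_one,
      Derivation.map_one_eq_zero, smul_eq_mul, D3] at h
    linear_combination h
  -- the ODE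
  have hE : (4*X - 27*X^2) * d⁄dX ℚ (d⁄dX ℚ T) + (2 - 27*X) * d⁄dX ℚ T + 3*T - 2 = 0 := by
    have key : ((4*X - 27*X^2) * d⁄dX ℚ (d⁄dX ℚ T) + (2 - 27*X) * d⁄dX ℚ T + 3*T - 2)
        * ((1 - T) * (1 - 3*T))^3 = 0 := by
      set P := d⁄dX ℚ T
      set U : ℚ⟦X⟧ := (1 - T) * (1 - 3*T)
      linear_combination ((4*X - 27*X^2) * U^2) * h2
        + ((4*X - 27*X^2)*(4 - 6*T)*(P*U + 1) + (2 - 27*X)*U^2) * h1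
        + (108*X - 162*T*X + 11 - 84*T + 216*T^2 - 216*T^3 + 81*T^4) * hT
    have hUne : (((1 - T) * (1 - 3*T))^3 : ℚ⟦X⟧) ≠ 0 := by
      intro h
      have hc := congrArg (constantCoeff) h
      simp [h0] at hc
    exact (mul_eq_zero.mp key).resolve_right hUne
  -- the coefficient recurrence
  have hrec : ∀ k : ℕ, 1 ≤ k →
      (2*((k:ℚ)+1)*(2*k+1)) * coeff (k+1) T = 3*(9*(k:ℚ)^2 - 1) * coeff k T := by
    intro k hk
    set Q := d⁄dX ℚ (d⁄dX ℚ T) with hQ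
    set P := d⁄dX ℚ T with hP
    have hE' : C 4 * (X*Q) - C 27 * (X*(X*Q)) + C 2 * P - C 27 * (X*P)
        + C 3 * T - C 2 * 1 = 0 := by
      have e4 : (C 4 : ℚ⟦X⟧) = 4 := map_ofNat _ 4
      have e27 : (C 27 : ℚ⟦X⟧) = 27 := map_ofNat _ 27
      have e2 : (C 2 : ℚ⟦X⟧) = 2 := map_ofNat _ 2
      have e3 : (C 3 : ℚ⟦X⟧) = 3 := map_ofNat _ 3
      rw [e4, e27, e2, e3]; linear_combination hE
    obtain ⟨m, rfl⟩ : ∃ m, k = m + 1 := ⟨k - 1, (Nat.succ_pred_eq_of_pos hk).symm⟩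
    have h := congrArg (coeff (m+1)) hE'
    have cP : ∀ j : ℕ, coeff j P = coeff (j+1) T * (j+1) := fun j => coeff_derivative T j
    have cQ : ∀ j : ℕ, coeff j Q = coeff (j+2) T * (j+1) * (j+2) := by
      intro j
      rw [hQ, coeff_derivative, cP (j+1)]
      push_cast; ring
    rcases m with _ | j
    · simp only [map_add, map_sub, coeff_C_mul, coeff_succ_X_mul, coeff_one, coeff_C, map_zero,
        cP, cQ] at h
      norm_num at h ⊢
      linear_combination h
    · have hx2 : coeff (j+1+1) (X*(X*Q)) = coeff j Q := by
        rw [coeff_succ_X_mul, coeff_succ_X_mul]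
      simp only [map_add, map_sub, coeff_C_mul, coeff_succ_X_mul, hx2, coeff_one, coeff_C,
        map_zero, cP, cQ] at h
      norm_num at h ⊢
      linear_combination h
  -- base case: coeff 1 T = 1
  have hbase : coeff 1 T = 1 := by
    have h := congrArg (coeff 1) hT
    rw [coeff_mul] at h
    simp only [Finset.Nat.antidiagonal_succ, Finset.Nat.antidiagonal_zero] at h
    simp [coeff_zero_eq_constantCoeff, h0, coeff_X] at h
    exact h
  -- induction
  intro n hn
  induction n, hn using Nat.le_induction with
  | base => simpa using hbase
  | succ n hn ih =>
    obtain ⟨m, rfl⟩ : ∃ m, n = m + 1 := ⟨n - 1, (Nat.succ_pred_eq_of_pos hn).symm⟩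
    rw [show 3*(m+1) - 2 = 3*m+1 by omega, show (m+1) - 1 = m by omega] at ih
    rw [show 3*(m+1+1) - 2 = 3*m+4 by omega, show (m+1+1) - 1 = m+1 by omega]
    have hr := hrec (m+1) (by omega)
    rw [ih] at hr
    have hb := dep_tree_binom_step m
    have hne1 : ((m:ℚ)+1) ≠ 0 := by positivity
    have hne2 : (2*((m:ℚ)+1)+1) ≠ 0 := by positivity
    have hne3 : ((m:ℚ)+1+1) ≠ 0 := by positivity
    push_cast at hr ⊢
    field_simp at hr hb ⊢
    nlinarith [hr, hb]
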